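/- Let w ≥ 1, let d ≥ 1, let M be a d×d complex matrix, and let ψ ∈ ℂ^d. Define the post-interaction state Φ = (1/√2)(e_{0^w} ⊗ ψ + e_{1^w} ⊗ Mψ) on the register ℂ^{(Fin w → {0,1})} ⊗ ℂ^d, where e_g denotes the computational basis vector at g. For each X-basis outcome string f : Fin w → {0,1}, let ⟨x_f| denote the bra of the X-basis state x_f(g) = 2^{−w/2}(−1)^{f·g}. Then (⟨x_f| ⊗ I) Φ = 2^{−w/2} √2 · ((I + (−1)^{|f|} M)/2) ψ, where |f| = Σ_i f(i) mod 2 is the parity of the outcome string. In particular, when M is a Hermitian unitary, measuring every cat qubit in the X basis and taking the parity of the outcomes realizes a projective measurement of the observable M on ψ, with outcome sign (−1)^{|f|}. -/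

import Mathlib

open Matrix
open scoped Classical

noncomputable section

/-- The X-basis state on `w` qubits labelled by an outcome string `f : Fin w → {0,1}`:
`x_f(g) = 2^{−w/2} (−1)^{f·g}` where `f·g = Σ_i f(i)g(i)`. -/
def xBasis (w : ℕ) (f : Fin w → Fin 2) : (Fin w → Fin 2) → ℂ :=
  fun g => ((Real.sqrt 2 : ℂ)⁻¹) ^ w * (-1 : ℂ) ^ (∑ i, (f i : ℕ) * (g i : ℕ))

/-- Let `w ≥ 1`, `d ≥ 1`, `M` a `d×d` complex matrix and `ψ ∈ ℂ^d`.  Define the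
post-interaction state `Φ = (1/√2)(e_{0^w} ⊗ ψ + e_{1^w} ⊗ Mψ)` on the register
`ℂ^{(Fin w → {0,1})} ⊗ ℂ^d`.  For each X-basis outcome string `f : Fin w → {0,1}`,
`(⟨x_f| ⊗ I) Φ = 2^{−w/2} √2 · ((I + (−1)^{|f|} M)/2) ψ`, where `|f| = Σ_i f(i) mod 2`
is the parity of the outcome string.  In particular, when `M` is a Hermitian unitary,
measuring every cat qubit in the X basis and taking the parity of the outcomes realizes a
projective measurement of the observable `M` on `ψ`, with outcome sign `(−1)^{|f|}`. -/
theorem cat_based_measurement_gadget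
    (w d : ℕ) (hw : 1 ≤ w) (hd : 1 ≤ d)
    (M : Matrix (Fin d) (Fin d) ℂ) (ψ : Fin d → ℂ) (f : Fin w → Fin 2) :
    let Φ : (Fin w → Fin 2) → Fin d → ℂ := fun g a =>
      (Real.sqrt 2 : ℂ)⁻¹ *
        ((if g = (fun _ => 0) then ψ a else 0) +
         (if g = (fun _ => 1) then M.mulVec ψ a else 0))
    (fun a => ∑ g : Fin w → Fin 2, (starRingEnd ℂ) (xBasis w f g) * Φ g a)
      = (((Real.sqrt 2 : ℂ)⁻¹) ^ w * (Real.sqrt 2 : ℂ)) •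
          ((2 : ℂ)⁻¹ •
            ((1 + ((-1 : ℂ) ^ ((∑ i, (f i : ℕ)) % 2)) • M).mulVec ψ)) := by
  intro Φ
  have hs2 : ((Real.sqrt 2 : ℝ) : ℂ) ^ 2 = 2 := by
    norm_cast
    rw [Real.sq_sqrt] <;> norm_num
  have hs0 : ((Real.sqrt 2 : ℝ) : ℂ) ≠ 0 := by
    intro h
    rw [h] at hs2; norm_num at hs2
  have hpar : (-1 : ℂ) ^ ((∑ i, (f i : ℕ)) % 2) = (-1 : ℂ) ^ (∑ i, (f i : ℕ)) := by
    conv_rhs => rw [← Nat.mod_add_div (∑ i, (f i : ℕ)) 2, pow_add, pow_mul]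
    norm_num
  funext a
  have hx : ∀ g, (starRingEnd ℂ) (xBasis w f g) = xBasis w f g := by
    intro g
    simp [xBasis, _root_.map_mul, map_pow, map_inv₀, Complex.conj_ofReal]
  simp only [Φ, hx, mul_add, mul_ite, mul_zero, Finset.sum_add_distrib,
    Finset.sum_ite_eq' Finset.univ]
  simp only [Finset.mem_univ, if_true, xBasis]
  have h0 : (∑ i, (f i : ℕ) * (((fun _ => (0:Fin 2)) : Fin w → Fin 2) i : ℕ)) = 0 := by simp
  have h1 : (∑ i, (f i : ℕ) * (((fun _ => (1:Fin 2)) : Fin w → Fin 2) i : ℕ)) = ∑ i, (f i : ℕ) := by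
    simp
  rw [h0, h1, hpar]
  simp only [Pi.smul_apply, Matrix.mulVec, dotProduct, Matrix.add_apply,
    Matrix.one_apply, Matrix.smul_apply, smul_eq_mul]
  simp only [add_mul, ite_mul, one_mul, zero_mul, Finset.sum_add_distrib,
    Finset.sum_ite_eq' Finset.univ, Finset.mem_univ, if_true, pow_zero]
  field_simp
  ring_nf
  rw [hs2]
  have key : ∑ x : Fin d, ((-1:ℂ) ^ ∑ i, (f i:ℕ)) * M a x * ψ x
      = ((-1:ℂ) ^ ∑ i, (f i:ℕ)) * ∑ x, M a x * ψ x := by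
    rw [Finset.mul_sum]
    exact Finset.sum_congr rfl fun x _ => by ring
  simp only [Finset.sum_ite_eq, Finset.mem_univ, if_true, ← Finset.sum_mul]; ring
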